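/- Let A > 0, n ≥ 1, let g: [0,A] → ℝⁿ be continuous, and let k: [0,A] × [0,A] × ℝⁿ → ℝⁿ be continuous and satisfy the uniform Lipschitz condition ‖k(x,y,u) - k(x,y,v)‖ ≤ M·‖u - v‖ for all x, y ∈ [0,A] and u, v ∈ ℝⁿ, for some M ≥ 0. Then there exists a unique continuous function f: [0,A] → ℝⁿ such that f(x) = g(x) + ∫_0^x k(x, y, f(y)) dy for all x ∈ [0,A]. -/

import Mathlib

open MeasureTheory Real Set Filter Topology Function

namespace Stmt14
variable {n : ℕ} {A : ℝ}
variable {k : ℝ → ℝ → EuclideanSpace ℝ (Fin n) → EuclideanSpace ℝ (Fin n)}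

lemma kernel_cont
    (hk : ContinuousOn
      (fun q : ℝ × ℝ × EuclideanSpace ℝ (Fin n) => k q.1 q.2.1 q.2.2)
      (Icc 0 A ×ˢ Icc 0 A ×ˢ univ))
    {f : ℝ → EuclideanSpace ℝ (Fin n)} (hf : Continuous f) :
    ContinuousOn (fun p : ℝ × ℝ => k p.1 p.2 (f p.2)) (Icc 0 A ×ˢ Icc 0 A) := by
  have h1 : Continuous (fun p : ℝ × ℝ => (p.1, p.2, f p.2)) :=
    continuous_fst.prodMk (continuous_snd.prodMk (hf.comp continuous_snd))
  exact hk.comp h1.continuousOn (fun p hp => ⟨hp.1, hp.2, mem_univ _⟩)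

lemma kernel_contOn_snd
    (hk : ContinuousOn
      (fun q : ℝ × ℝ × EuclideanSpace ℝ (Fin n) => k q.1 q.2.1 q.2.2)
      (Icc 0 A ×ˢ Icc 0 A ×ˢ univ))
    {f : ℝ → EuclideanSpace ℝ (Fin n)} (hf : Continuous f) {x : ℝ} (hx : x ∈ Icc 0 A) :
    ContinuousOn (fun y => k x y (f y)) (Icc 0 A) := by
  have h1 : Continuous (fun y : ℝ => ((x, y) : ℝ × ℝ)) := continuous_const.prodMk continuous_id
  exact (kernel_cont hk hf).comp h1.continuousOn (fun y hy => ⟨hx, hy⟩)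

lemma kernel_integrableOn
    (hk : ContinuousOn
      (fun q : ℝ × ℝ × EuclideanSpace ℝ (Fin n) => k q.1 q.2.1 q.2.2)
      (Icc 0 A ×ˢ Icc 0 A ×ˢ univ))
    {f : ℝ → EuclideanSpace ℝ (Fin n)} (hf : Continuous f) {x : ℝ} (hx : x ∈ Icc 0 A) :
    IntegrableOn (fun y => k x y (f y)) (Ioc 0 x) :=
  ((kernel_contOn_snd hk hf hx).integrableOn_Icc).mono_set
    (Ioc_subset_Icc_self.trans (Icc_subset_Icc le_rfl hx.2))

lemma cont_integral (hA : 0 < A)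
    (hk : ContinuousOn
      (fun q : ℝ × ℝ × EuclideanSpace ℝ (Fin n) => k q.1 q.2.1 q.2.2)
      (Icc 0 A ×ˢ Icc 0 A ×ˢ univ))
    {f : ℝ → EuclideanSpace ℝ (Fin n)} (hf : Continuous f) :
    ContinuousOn (fun x => ∫ y in Ioc (0:ℝ) x, k x y (f y)) (Icc 0 A) := by
  have hS : IsCompact (Icc (0:ℝ) A ×ˢ Icc (0:ℝ) A) := isCompact_Icc.prod isCompact_Icc
  have hKu := hS.uniformContinuousOn_of_continuous (kernel_cont hk hf)
  rw [Metric.uniformContinuousOn_iff] at hKu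
  intro x₀ hx₀
  have hIcc : ∀ x ∈ Icc (0:ℝ) A, IntegrableOn (fun y => k x y (f y)) (Icc 0 A) :=
    fun x hx => (kernel_contOn_snd hk hf hx).integrableOn_Icc
  have h2 : ContinuousWithinAt (fun x => ∫ y in Ioc (0:ℝ) x, k x₀ y (f y)) (Icc 0 A) x₀ :=
    (intervalIntegral.continuousOn_primitive (hIcc x₀ hx₀)) x₀ hx₀
  have h1 : Tendsto (fun x => ∫ y in Ioc (0:ℝ) x, (k x y (f y) - k x₀ y (f y)))
      (𝓝[Icc 0 A] x₀) (𝓝 0) := by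
    rw [NormedAddCommGroup.tendsto_nhds_zero]
    intro ε hε
    obtain ⟨δ, hδ, hδ'⟩ := hKu (ε / (A + 1)) (by positivity)
    filter_upwards [nhdsWithin_le_nhds (Metric.ball_mem_nhds x₀ hδ), self_mem_nhdsWithin]
      with x hx1 hx2
    have hsub : Ioc (0:ℝ) x ⊆ Icc 0 A :=
      Ioc_subset_Icc_self.trans (Icc_subset_Icc le_rfl hx2.2)
    have hmeas : IntegrableOn (fun y => k x y (f y) - k x₀ y (f y)) (Ioc 0 x) :=
      ((hIcc x hx2).mono_set hsub).sub ((hIcc x₀ hx₀).mono_set hsub)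
    have hb : ∀ y ∈ Ioc (0:ℝ) x, ‖k x y (f y) - k x₀ y (f y)‖ ≤ ε / (A + 1) := by
      intro y hy
      have hyIcc : y ∈ Icc (0:ℝ) A := hsub hy
      have hd : dist ((x, y) : ℝ × ℝ) ((x₀, y) : ℝ × ℝ) < δ := by
        rw [Prod.dist_eq]
        simpa [dist_self, max_eq_left dist_nonneg] using hx1
      have := hδ' (x, y) ⟨hx2, hyIcc⟩ (x₀, y) ⟨hx₀, hyIcc⟩ hd
      rw [dist_eq_norm] at this
      exact this.le
    calc ‖∫ y in Ioc (0:ℝ) x, (k x y (f y) - k x₀ y (f y))‖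
        ≤ (ε / (A + 1)) * (volume (Ioc (0:ℝ) x)).toReal :=
          norm_setIntegral_le_of_norm_le_const measure_Ioc_lt_top hb
      _ ≤ (ε / (A + 1)) * A := by
          rw [Real.volume_Ioc]
          gcongr
          rw [ENNReal.toReal_ofReal (by linarith [hx2.1, hx2.2] : (0:ℝ) ≤ x - 0)]
          linarith [hx2.2]
      _ < ε := by
          rw [div_mul_eq_mul_div, div_lt_iff₀ (by linarith)]
          nlinarith
  have h3 := h1.add h2
  rw [zero_add] at h3
  have heq : ∀ x ∈ Icc (0:ℝ) A,
      (∫ y in Ioc (0:ℝ) x, (k x y (f y) - k x₀ y (f y))) + (∫ y in Ioc (0:ℝ) x, k x₀ y (f y))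
        = ∫ y in Ioc (0:ℝ) x, k x y (f y) := by
    intro x hx
    have hsub : Ioc (0:ℝ) x ⊆ Icc 0 A :=
      Ioc_subset_Icc_self.trans (Icc_subset_Icc le_rfl hx.2)
    rw [integral_sub ((hIcc x hx).mono_set hsub) ((hIcc x₀ hx₀).mono_set hsub),
      sub_add_cancel]
  have h4 : Tendsto (fun x => ∫ y in Ioc (0:ℝ) x, k x y (f y)) (𝓝[Icc 0 A] x₀)
      (𝓝 (∫ y in Ioc (0:ℝ) x₀, k x₀ y (f y))) := by
    refine h3.congr' ?_
    filter_upwards [self_mem_nhdsWithin] with x hx using heq x hx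
  exact h4


noncomputable def T (A : ℝ) (hA : 0 < A)
    (g : ℝ → EuclideanSpace ℝ (Fin n)) (hg : ContinuousOn g (Icc 0 A))
    (k : ℝ → ℝ → EuclideanSpace ℝ (Fin n) → EuclideanSpace ℝ (Fin n))
    (hk : ContinuousOn
      (fun q : ℝ × ℝ × EuclideanSpace ℝ (Fin n) => k q.1 q.2.1 q.2.2)
      (Icc 0 A ×ˢ Icc 0 A ×ˢ univ))
    (F : C(Icc (0:ℝ) A, EuclideanSpace ℝ (Fin n))) :
    C(Icc (0:ℝ) A, EuclideanSpace ℝ (Fin n)) :=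
  ⟨fun x => g x + ∫ y in Ioc (0:ℝ) x.1, k x.1 y (F (projIcc 0 A hA.le y)),
    (hg.add (cont_integral hA hk (F.continuous.comp continuous_projIcc))).restrict⟩

lemma T_apply (hA : 0 < A)
    {g : ℝ → EuclideanSpace ℝ (Fin n)} (hg : ContinuousOn g (Icc 0 A))
    (hk : ContinuousOn
      (fun q : ℝ × ℝ × EuclideanSpace ℝ (Fin n) => k q.1 q.2.1 q.2.2)
      (Icc 0 A ×ˢ Icc 0 A ×ˢ univ))
    (F : C(Icc (0:ℝ) A, EuclideanSpace ℝ (Fin n))) (x : Icc (0:ℝ) A) :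
    T A hA g hg k hk F x = g x + ∫ y in Ioc (0:ℝ) x.1, k x.1 y (F (projIcc 0 A hA.le y)) :=
  rfl


lemma iter_bound (hA : 0 < A)
    {g : ℝ → EuclideanSpace ℝ (Fin n)} (hg : ContinuousOn g (Icc 0 A))
    (hk : ContinuousOn
      (fun q : ℝ × ℝ × EuclideanSpace ℝ (Fin n) => k q.1 q.2.1 q.2.2)
      (Icc 0 A ×ˢ Icc 0 A ×ˢ univ))
    {M : ℝ} (hM : 0 ≤ M)
    (hlip : ∀ x ∈ Icc (0 : ℝ) A, ∀ y ∈ Icc (0 : ℝ) A,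
      ∀ u v : EuclideanSpace ℝ (Fin n), ‖k x y u - k x y v‖ ≤ M * ‖u - v‖)
    (F₁ F₂ : C(Icc (0:ℝ) A, EuclideanSpace ℝ (Fin n))) (m : ℕ) :
    ∀ x : Icc (0:ℝ) A,
      ‖(T A hA g hg k hk)^[m] F₁ x - (T A hA g hg k hk)^[m] F₂ x‖
        ≤ M ^ m * x.1 ^ m / m.factorial * dist F₁ F₂ := by
  induction m with
  | zero =>
    intro x
    simp only [Function.iterate_zero, id_eq, pow_zero, Nat.factorial_zero, Nat.cast_one,
      one_mul, div_one]
    rw [← dist_eq_norm]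
    exact ContinuousMap.dist_apply_le_dist x
  | succ m ih =>
    intro x
    rw [Function.iterate_succ_apply', Function.iterate_succ_apply']
    set G₁ := (T A hA g hg k hk)^[m] F₁ with hG₁
    set G₂ := (T A hA g hg k hk)^[m] F₂ with hG₂
    have hf₁ : Continuous (fun y => G₁ (projIcc 0 A hA.le y)) :=
      G₁.continuous.comp continuous_projIcc
    have hf₂ : Continuous (fun y => G₂ (projIcc 0 A hA.le y)) :=
      G₂.continuous.comp continuous_projIcc
    have hi₁ := kernel_integrableOn hk hf₁ x.2
    have hi₂ := kernel_integrableOn hk hf₂ x.2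
    have hD : (0:ℝ) ≤ dist F₁ F₂ := dist_nonneg
    have hb : ∀ y ∈ Ioc (0:ℝ) x.1,
        ‖k x.1 y (G₁ (projIcc 0 A hA.le y)) - k x.1 y (G₂ (projIcc 0 A hA.le y))‖
          ≤ M * (M ^ m * y ^ m / m.factorial * dist F₁ F₂) := by
      intro y hy
      have hyIcc : y ∈ Icc (0:ℝ) A := ⟨hy.1.le, hy.2.trans x.2.2⟩
      calc ‖k x.1 y (G₁ (projIcc 0 A hA.le y)) - k x.1 y (G₂ (projIcc 0 A hA.le y))‖
          ≤ M * ‖G₁ (projIcc 0 A hA.le y) - G₂ (projIcc 0 A hA.le y)‖ :=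
            hlip x.1 x.2 y hyIcc _ _
        _ ≤ M * (M ^ m * y ^ m / m.factorial * dist F₁ F₂) := by
            rw [projIcc_of_mem hA.le hyIcc]
            exact mul_le_mul_of_nonneg_left (ih ⟨y, hyIcc⟩) hM
    have hbint : IntegrableOn
        (fun y => M * (M ^ m * y ^ m / m.factorial * dist F₁ F₂)) (Ioc 0 x.1) := by
      apply Continuous.integrableOn_Ioc
      exact continuous_const.mul ((((continuous_const.mul (continuous_pow m)).div_const _)).mul continuous_const)
    calc ‖T A hA g hg k hk G₁ x - T A hA g hg k hk G₂ x‖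
        = ‖∫ y in Ioc (0:ℝ) x.1,
            (k x.1 y (G₁ (projIcc 0 A hA.le y)) - k x.1 y (G₂ (projIcc 0 A hA.le y)))‖ := by
          rw [T_apply, T_apply, add_sub_add_left_eq_sub, ← integral_sub hi₁ hi₂]
      _ ≤ ∫ y in Ioc (0:ℝ) x.1, M * (M ^ m * y ^ m / m.factorial * dist F₁ F₂) := by
          refine norm_integral_le_of_norm_le hbint ?_
          exact (ae_restrict_iff' measurableSet_Ioc).2 (Eventually.of_forall hb)
      _ = M ^ (m+1) * x.1 ^ (m+1) / (m+1).factorial * dist F₁ F₂ := by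
          rw [← intervalIntegral.integral_of_le x.2.1]
          have hfun : (fun y : ℝ => M * (M ^ m * y ^ m / (m.factorial:ℝ) * dist F₁ F₂))
              = fun y : ℝ => (M ^ (m+1) * dist F₁ F₂ / (m.factorial:ℝ)) * y ^ m := by
            funext y; ring
          rw [hfun, intervalIntegral.integral_const_mul, integral_pow]
          have hm : ((m.factorial:ℝ)) ≠ 0 := Nat.cast_ne_zero.2 m.factorial_ne_zero
          have hm1 : ((m+1 : ℕ):ℝ) ≠ 0 := Nat.cast_ne_zero.2 (Nat.succ_ne_zero m)
          rw [Nat.factorial_succ]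
          push_cast
          field_simp
          ring

lemma exists_contracting (hA : 0 < A)
    {g : ℝ → EuclideanSpace ℝ (Fin n)} (hg : ContinuousOn g (Icc 0 A))
    (hk : ContinuousOn
      (fun q : ℝ × ℝ × EuclideanSpace ℝ (Fin n) => k q.1 q.2.1 q.2.2)
      (Icc 0 A ×ˢ Icc 0 A ×ˢ univ))
    {M : ℝ} (hM : 0 ≤ M)
    (hlip : ∀ x ∈ Icc (0 : ℝ) A, ∀ y ∈ Icc (0 : ℝ) A,
      ∀ u v : EuclideanSpace ℝ (Fin n), ‖k x y u - k x y v‖ ≤ M * ‖u - v‖) :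
    ∃ (m : ℕ) (K : NNReal), ContractingWith K ((T A hA g hg k hk)^[m]) := by
  have htd := FloorSemiring.tendsto_pow_div_factorial_atTop (M * A)
  have hev := htd.eventually (gt_mem_nhds (by norm_num : (0:ℝ) < 1))
  obtain ⟨m, hm⟩ := hev.exists
  have hc0 : (0:ℝ) ≤ (M * A) ^ m / m.factorial := by positivity
  refine ⟨m, Real.toNNReal ((M * A) ^ m / m.factorial), ?_, ?_⟩
  · rw [← NNReal.coe_lt_coe, Real.coe_toNNReal _ hc0]
    exact hm
  · apply LipschitzWith.of_dist_le_mul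
    intro F₁ F₂
    rw [Real.coe_toNNReal _ hc0]
    have hD : (0:ℝ) ≤ dist F₁ F₂ := dist_nonneg
    rw [ContinuousMap.dist_le (by positivity)]
    intro x
    rw [dist_eq_norm]
    calc ‖(T A hA g hg k hk)^[m] F₁ x - (T A hA g hg k hk)^[m] F₂ x‖
        ≤ M ^ m * x.1 ^ m / m.factorial * dist F₁ F₂ :=
          iter_bound hA hg hk hM hlip F₁ F₂ m x
      _ ≤ (M * A) ^ m / m.factorial * dist F₁ F₂ := by
          rw [mul_pow]
          gcongr
          · exact x.2.1
          · exact x.2.2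

end Stmt14

open Stmt14

/-- existence and uniqueness of a continuous solution
`f : [0,A] → ℝⁿ` of the Volterra integral equation
`f(x) = g(x) + ∫_0^x k(x,y,f(y)) dy` with continuous free term `g`,
continuous kernel `k`, and a uniform Lipschitz condition in the unknown. -/
theorem stmt_14 (A : ℝ) (hA : 0 < A) (n : ℕ) (hn : 1 ≤ n)
    (g : ℝ → EuclideanSpace ℝ (Fin n)) (hg : ContinuousOn g (Icc 0 A))
    (k : ℝ → ℝ → EuclideanSpace ℝ (Fin n) → EuclideanSpace ℝ (Fin n))
    (hk : ContinuousOn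
      (fun q : ℝ × ℝ × EuclideanSpace ℝ (Fin n) => k q.1 q.2.1 q.2.2)
      (Icc 0 A ×ˢ Icc 0 A ×ˢ univ))
    (M : ℝ) (hM : 0 ≤ M)
    (hlip : ∀ x ∈ Icc (0 : ℝ) A, ∀ y ∈ Icc (0 : ℝ) A,
      ∀ u v : EuclideanSpace ℝ (Fin n), ‖k x y u - k x y v‖ ≤ M * ‖u - v‖) :
    (∃ f : ℝ → EuclideanSpace ℝ (Fin n),
        ContinuousOn f (Icc 0 A) ∧
        ∀ x ∈ Icc (0 : ℝ) A, f x = g x + ∫ y in Ioc (0 : ℝ) x, k x y (f y)) ∧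
    (∀ f₁ f₂ : ℝ → EuclideanSpace ℝ (Fin n),
        ContinuousOn f₁ (Icc 0 A) → ContinuousOn f₂ (Icc 0 A) →
        (∀ x ∈ Icc (0 : ℝ) A, f₁ x = g x + ∫ y in Ioc (0 : ℝ) x, k x y (f₁ y)) →
        (∀ x ∈ Icc (0 : ℝ) A, f₂ x = g x + ∫ y in Ioc (0 : ℝ) x, k x y (f₂ y)) →
        ∀ x ∈ Icc (0 : ℝ) A, f₁ x = f₂ x) := by
  haveI : Nonempty (Icc (0:ℝ) A) := ⟨⟨0, le_refl 0, hA.le⟩⟩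
  obtain ⟨m, K, hcon⟩ := exists_contracting hA hg hk hM hlip
  set Θ := T A hA g hg k hk with hΘ
  have hfix : Function.IsFixedPt Θ (hcon.fixedPoint (Θ^[m])) :=
    hcon.isFixedPt_fixedPoint_iterate
  set F := hcon.fixedPoint (Θ^[m]) with hF
  constructor
  · refine ⟨fun x => F (projIcc 0 A hA.le x),
      (F.continuous.comp continuous_projIcc).continuousOn, ?_⟩
    intro x hx
    have h1 : F ⟨x, hx⟩ = g x + ∫ y in Ioc (0:ℝ) x, k x y (F (projIcc 0 A hA.le y)) := by
      conv_lhs => rw [← hfix]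
      rfl
    simpa [projIcc_of_mem hA.le hx] using h1
  · intro f₁ f₂ hf₁ hf₂ he₁ he₂ x hx
    have key : ∀ (f : ℝ → EuclideanSpace ℝ (Fin n)), ContinuousOn f (Icc 0 A) →
        (∀ x ∈ Icc (0 : ℝ) A, f x = g x + ∫ y in Ioc (0 : ℝ) x, k x y (f y)) →
        ∀ x (hx : x ∈ Icc (0:ℝ) A), f x = F ⟨x, hx⟩ := by
      intro f hf he z hz
      set G : C(Icc (0:ℝ) A, EuclideanSpace ℝ (Fin n)) := ⟨fun x => f x, hf.restrict⟩ with hGdef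
      have hGfix : Function.IsFixedPt Θ G := by
        apply ContinuousMap.ext
        intro w
        rw [hΘ, T_apply hA hg hk G w]
        have hint : (∫ y in Ioc (0:ℝ) w.1, k w.1 y (G (projIcc 0 A hA.le y)))
            = ∫ y in Ioc (0:ℝ) w.1, k w.1 y (f y) := by
          apply setIntegral_congr_fun measurableSet_Ioc
          intro y hy
          have hyIcc : y ∈ Icc (0:ℝ) A := ⟨hy.1.le, hy.2.trans w.2.2⟩
          simp only
          rw [projIcc_of_mem hA.le hyIcc]
          rfl
        rw [hint, ← he w.1 w.2]
        rfl
      have : G = F := hcon.fixedPoint_unique (hGfix.iterate m)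
      calc f z = G ⟨z, hz⟩ := rfl
        _ = F ⟨z, hz⟩ := by rw [this]
    rw [key f₁ hf₁ he₁ x hx, key f₂ hf₂ he₂ x hx]
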